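/- Let κ > 0, let {q_i}_{i≥1} be an enumeration of the rational numbers, let V = ⋃_{i≥1} (q_i − κ·2^{−(i+1)}, q_i + κ·2^{−(i+1)}), K = ℝ\V, and α = χ_K. Let a < b with b − a > κ and set ū = (1/2)·χ_{[a,b]}. If u ∈ L¹(ℝ) satisfies ‖u − ū‖_{L¹(ℝ)} < ρ for some 0 < ρ < (b−a−κ)/4, then the set B = {x ∈ [a,b] : 1/4 ≤ u(x) ≤ 3/4} has Lebesgue measure m(B) ≥ b − a − 4‖u − ū‖_{L¹} > κ, hence m(K ∩ B) > 0, and the function x ↦ α(x)·u(x)·(1 − u(x)) has infinite total variation on ℝ. -/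

import Mathlib

open MeasureTheory Set Filter Topology

open scoped ENNReal

/-- The open set `V = ⋃ᵢ (qᵢ − κ 2^{−(i+1)}, qᵢ + κ 2^{−(i+1)})` covering the
rationals (with the enumeration indexed by `ℕ` starting at `0`). -/
def Vset (κ : ℝ) (q : ℕ → ℝ) : Set ℝ :=
  ⋃ i : ℕ, Ioo (q i - κ * (2:ℝ)^(-(i:ℤ) - 2)) (q i + κ * (2:ℝ)^(-(i:ℤ) - 2))

/-- The closed, totally disconnected set `K = ℝ \ V`. -/
def Kset (κ : ℝ) (q : ℕ → ℝ) : Set ℝ := (Vset κ q)ᶜ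

open Classical in
/-- `α = χ_K`, the characteristic function of `K`. -/
noncomputable def alphaFun (κ : ℝ) (q : ℕ → ℝ) (x : ℝ) : ℝ :=
  if x ∈ Kset κ q then 1 else 0

/-- The initial datum `ū = (1/2) χ_{[a,b]}`. -/
noncomputable def uBar (a b : ℝ) (x : ℝ) : ℝ :=
  if x ∈ Icc a b then 1/2 else 0

lemma evar_top_of_osc {f : ℝ → ℝ} {S : Set ℝ} (hS : S.Infinite)
    (hf : ∀ x ∈ S, 3/16 ≤ f x)
    (hz : ∀ x y, x ∈ S → y ∈ S → x < y → ∃ z, x ≤ z ∧ z ≤ y ∧ f z = 0) :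
    eVariationOn f Set.univ = ⊤ := by
  have key : ∀ n : ℕ, (n : ℝ≥0∞) * ENNReal.ofReal (3/16) ≤ eVariationOn f Set.univ := by
    intro n
    obtain ⟨t, hts, hcard⟩ := hS.exists_subset_card_eq (n + 1)
    set e := t.orderIsoOfFin hcard with he
    set x : Fin (n + 1) → ℝ := fun i => (e i : ℝ) with hx
    have hxmono : StrictMono x := fun i j hij => e.strictMono hij
    have hxS : ∀ i, x i ∈ S := fun i => hts (e i).2
    set X : ℕ → ℝ := fun k => x ⟨min k n, (min_le_right k n).trans_lt (Nat.lt_succ_self n)⟩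
      with hX
    have hXmono : Monotone X := by
      intro k l hkl
      exact hxmono.monotone (by simp [Fin.mk_le_mk]; omega)
    have hXS : ∀ k, X k ∈ S := fun k => hxS _
    have hXlt : ∀ m, m < n → X m < X (m + 1) := by
      intro m hm
      apply hxmono
      simp [Fin.mk_lt_mk]; omega
    have hR : ∀ m : ℕ, ∃ z, X m ≤ z ∧ z ≤ X (m + 1) ∧ (m < n → f z = 0) := by
      intro m
      rcases lt_or_ge m n with hm | hm
      · obtain ⟨z, hz1, hz2, hz3⟩ := hz _ _ (hXS m) (hXS (m+1)) (hXlt m hm)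
        exact ⟨z, hz1, hz2, fun _ => hz3⟩
      · exact ⟨X m, le_rfl, hXmono (Nat.le_succ m), fun h => absurd h (by omega)⟩
    choose R hR1 hR2 hR3 using hR
    set y : ℕ → ℝ := fun k => if Even k then X (k / 2) else R (k / 2) with hy
    have hymono : Monotone y := by
      apply monotone_nat_of_le_succ
      intro k
      rcases Nat.even_or_odd k with hk | hk
      · obtain ⟨m, hm⟩ := hk
        have hk : Even k := ⟨m, hm⟩
        have h1 : ¬ Even (k + 1) := by simp [Nat.even_add_one, hk]
        have h2 : (k + 1) / 2 = k / 2 := by omega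
        simp only [hy, if_pos hk, if_neg h1, h2]
        exact hR1 _
      · have h1 : ¬ Even k := Nat.not_even_iff_odd.symm.1 hk
        have h2 : Even (k + 1) := Nat.even_add_one.2 h1
        have h3 : (k + 1) / 2 = k / 2 + 1 := by
          obtain ⟨m, hm⟩ := hk; omega
        simp only [hy, if_neg h1, if_pos h2, h3]
        exact hR2 _
      -- fallthrough
    have hterm : ∀ i ∈ Finset.range (2 * n),
        ENNReal.ofReal (3/16) ≤ edist (f (y (i + 1))) (f (y i)) := by
      intro i hi
      rw [Finset.mem_range] at hi
      rcases Nat.even_or_odd i with hk | hk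
      · obtain ⟨m, hm⟩ := hk
        have hmn : m < n := by omega
        have h1 : Even i := ⟨m, hm⟩
        have h2 : ¬ Even (i + 1) := by simp [Nat.even_add_one, h1]
        have hi2 : i / 2 = m := by omega
        have hi12 : (i + 1) / 2 = m := by omega
        have hy1 : y i = X m := by simp only [hy, if_pos h1, hi2]
        have hy2 : y (i + 1) = R m := by simp only [hy, if_neg h2, hi12]
        rw [hy1, hy2, hR3 m hmn]
        rw [edist_dist, Real.dist_eq]
        apply ENNReal.ofReal_le_ofReal
        have := hf _ (hXS m)
        rw [abs_of_nonpos (by linarith)]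
        linarith
      · obtain ⟨m, hm⟩ := hk
        have hmn : m < n := by omega
        have h1 : ¬ Even i := by simp [hm, parity_simps]
        have h2 : Even (i + 1) := Nat.even_add_one.2 h1
        have hi2 : i / 2 = m := by omega
        have hi12 : (i + 1) / 2 = m + 1 := by omega
        have hy1 : y i = R m := by simp only [hy, if_neg h1, hi2]
        have hy2 : y (i + 1) = X (m + 1) := by simp only [hy, if_pos h2, hi12]
        rw [hy1, hy2, hR3 m hmn]
        rw [edist_dist, Real.dist_eq]
        apply ENNReal.ofReal_le_ofReal
        have := hf _ (hXS (m + 1))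
        rw [abs_of_nonneg (by linarith)]
        linarith
    calc (n : ℝ≥0∞) * ENNReal.ofReal (3/16)
        ≤ (2 * n : ℕ) • ENNReal.ofReal (3/16) := by
          rw [nsmul_eq_mul]
          exact mul_le_mul_left
            (by exact_mod_cast Nat.le_mul_of_pos_left n (by norm_num)) _
      _ = (Finset.range (2 * n)).card • ENNReal.ofReal (3/16) := by
          rw [Finset.card_range]
      _ ≤ ∑ i ∈ Finset.range (2 * n), edist (f (y (i + 1))) (f (y i)) :=
          Finset.card_nsmul_le_sum _ _ _ hterm
      _ ≤ eVariationOn f Set.univ :=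
          eVariationOn.sum_le (f := f) hymono (fun i => mem_univ _)
  rw [eq_top_iff]
  have h1 : (⊤ : ℝ≥0∞) = (⨆ n : ℕ, (n : ℝ≥0∞)) * ENNReal.ofReal (3/16) := by
    rw [ENNReal.iSup_natCast, ENNReal.top_mul (by norm_num)]
  rw [h1, ENNReal.iSup_mul]
  exact iSup_le key

/-- Final counterexample of Section 7: if `b − a > κ` and `u ∈ L¹(ℝ)` is
`L¹`-close to `ū = (1/2)χ_{[a,b]}` (within `ρ < (b−a−κ)/4`), then the set
`B = {x ∈ [a,b] : 1/4 ≤ u ≤ 3/4}` has measure `≥ b − a − 4‖u − ū‖_{L¹} > κ`, so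
`m(K ∩ B) > 0`, and `x ↦ α(x) u(x)(1−u(x))` has infinite total variation; hence
`ū` is not in the closure of the domain of `A u = (α u(1−u))_x`. -/
theorem flux_composition_unbounded_variation
    (κ : ℝ) (hκ : 0 < κ)
    (q : ℕ → ℝ) (hq_inj : Function.Injective q)
    (hq_range : Set.range q = Set.range ((↑) : ℚ → ℝ))
    (a b : ℝ) (hab : a < b) (hlen : κ < b - a)
    (ρ : ℝ) (hρpos : 0 < ρ) (hρsmall : ρ < (b - a - κ) / 4)
    (u : ℝ → ℝ) (hu : Integrable u)
    (hclose : (∫ x, |u x - uBar a b x|) < ρ) :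
    ENNReal.ofReal (b - a - 4 * ∫ x, |u x - uBar a b x|)
      ≤ volume {x | x ∈ Icc a b ∧ 1/4 ≤ u x ∧ u x ≤ 3/4} ∧
    κ < b - a - 4 * ∫ x, |u x - uBar a b x| ∧
    0 < volume (Kset κ q ∩ {x | x ∈ Icc a b ∧ 1/4 ≤ u x ∧ u x ≤ 3/4}) ∧
    eVariationOn (fun x => alphaFun κ q x * u x * (1 - u x)) Set.univ = ⊤ := by
  set I := ∫ x, |u x - uBar a b x| with hI
  set B := {x | x ∈ Icc a b ∧ 1/4 ≤ u x ∧ u x ≤ 3/4} with hB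
  have huBar_eq : uBar a b = (Icc a b).indicator (fun _ => (1/2 : ℝ)) := by
    funext x; simp [uBar, Set.indicator]
  have huBar : Integrable (uBar a b) := by
    rw [huBar_eq]
    exact (integrable_indicator_iff measurableSet_Icc).2
      (integrableOn_const (by rw [Real.volume_Icc]; exact ENNReal.ofReal_ne_top))
  have hdiff : Integrable (fun x => |u x - uBar a b x|) := (hu.sub huBar).abs
  have hI0 : 0 ≤ I := integral_nonneg fun x => abs_nonneg _
  have part2 : κ < b - a - 4 * I := by linarith
  -- a measurable representative of u
  set g := hu.1.mk u with hg
  have hgm : StronglyMeasurable g := hu.1.stronglyMeasurable_mk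
  have hug : u =ᵐ[volume] g := hu.1.ae_eq_mk
  set B' := {x | x ∈ Icc a b ∧ 1/4 ≤ g x ∧ g x ≤ 3/4} with hB'
  have hBB' : volume B = volume B' := by
    apply measure_congr
    filter_upwards [hug] with x hx
    change (x ∈ Icc a b ∧ 1/4 ≤ u x ∧ u x ≤ 3/4) = (x ∈ Icc a b ∧ 1/4 ≤ g x ∧ g x ≤ 3/4)
    rw [hx]
  have hB'meas : MeasurableSet B' := by
    have : B' = Icc a b ∩ g ⁻¹' (Icc (1/4) (3/4)) := by
      ext x; simp [hB', mem_Icc, and_assoc]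
    rw [this]
    exact measurableSet_Icc.inter (hgm.measurable measurableSet_Icc)
  set D := Icc a b \ B' with hD
  have hDmeas : MeasurableSet D := measurableSet_Icc.diff hB'meas
  have hDfin : volume D ≠ ⊤ :=
    (lt_of_le_of_lt (measure_mono diff_subset)
      (by rw [Real.volume_Icc]; exact ENNReal.ofReal_lt_top)).ne
  have hdiffg : Integrable (fun x => |g x - uBar a b x|) :=
    hdiff.congr (by filter_upwards [hug] with x hx; rw [hx])
  have hIg : ∫ x, |g x - uBar a b x| = I :=
    (integral_congr_ae (by filter_upwards [hug] with x hx; rw [hx])).symm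
  have hlow : ∀ x ∈ D, (1:ℝ)/4 ≤ |g x - uBar a b x| := by
    intro x hx
    obtain ⟨hxI, hxB⟩ := hx
    have hub : uBar a b x = 1/2 := if_pos hxI
    have : ¬((1:ℝ)/4 ≤ g x ∧ g x ≤ 3/4) := fun h => hxB ⟨hxI, h.1, h.2⟩
    rw [not_and_or, not_le, not_le] at this
    rw [hub]
    rcases this with h | h
    · exact le_abs.2 (Or.inr (by linarith))
    · exact le_abs.2 (Or.inl (by linarith))
  have key : (1:ℝ)/4 * (volume D).toReal ≤ I := by
    calc (1:ℝ)/4 * (volume D).toReal ≤ ∫ x in D, |g x - uBar a b x| :=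
          setIntegral_ge_of_const_le_real hDmeas hDfin hlow hdiffg.integrableOn
      _ ≤ ∫ x, |g x - uBar a b x| :=
          setIntegral_le_integral hdiffg (Eventually.of_forall fun x => abs_nonneg _)
      _ = I := hIg
  have hD4I : volume D ≤ ENNReal.ofReal (4 * I) := by
    rw [ENNReal.le_ofReal_iff_toReal_le hDfin (by linarith)]
    linarith
  have part1 : ENNReal.ofReal (b - a - 4 * I) ≤ volume B := by
    rw [hBB']
    have hsub : Icc a b ⊆ B' ∪ D := fun x hx => by
      by_cases h : x ∈ B'
      · exact Or.inl h
      · exact Or.inr ⟨hx, h⟩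
    have h1 : ENNReal.ofReal (b - a) ≤ volume B' + ENNReal.ofReal (4 * I) :=
      calc ENNReal.ofReal (b - a) = volume (Icc a b) := (Real.volume_Icc).symm
        _ ≤ volume (B' ∪ D) := measure_mono hsub
        _ ≤ volume B' + volume D := measure_union_le _ _
        _ ≤ volume B' + ENNReal.ofReal (4 * I) := add_le_add le_rfl hD4I
    have h2 : b - a - 4 * I = (b - a) - 4 * I := by ring
    rw [h2, ENNReal.ofReal_sub _ (by linarith : (0:ℝ) ≤ 4 * I)]
    exact tsub_le_iff_right.2 h1
  -- measure of V
  have hVle : volume (Vset κ q) ≤ ENNReal.ofReal κ := by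
    calc volume (Vset κ q)
        ≤ ∑' i : ℕ, volume (Ioo (q i - κ * (2:ℝ)^(-(i:ℤ) - 2))
            (q i + κ * (2:ℝ)^(-(i:ℤ) - 2))) := measure_iUnion_le _
      _ = ∑' i : ℕ, ENNReal.ofReal (κ/2 * (1/2)^i) := by
          congr 1; funext i
          rw [Real.volume_Ioo]
          congr 1
          have h2 : (2:ℝ)^(-(i:ℤ) - 2) = (1/2)^i / 4 := by
            rw [zpow_sub₀ (two_ne_zero), zpow_neg, zpow_natCast]
            norm_num [one_div, inv_pow]
            simp [one_div, inv_pow]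
          rw [h2]; ring
      _ = ENNReal.ofReal (∑' i : ℕ, κ/2 * (1/2)^i) :=
          (ENNReal.ofReal_tsum_of_nonneg (fun i => by positivity)
            ((summable_geometric_of_lt_one (by norm_num) (by norm_num)).mul_left _)).symm
      _ = ENNReal.ofReal κ := by
          rw [tsum_mul_left, tsum_geometric_of_lt_one (by norm_num) (by norm_num)]
          norm_num
  have part3 : 0 < volume (Kset κ q ∩ B) := by
    rcases eq_zero_or_pos (volume (Kset κ q ∩ B)) with h0 | h0
    · exfalso
      have hsub : B ⊆ (Kset κ q ∩ B) ∪ Vset κ q := by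
        intro x hx
        by_cases h : x ∈ Vset κ q
        · exact Or.inr h
        · exact Or.inl ⟨h, hx⟩
      have : volume B ≤ ENNReal.ofReal κ := by
        calc volume B ≤ volume (Kset κ q ∩ B) + volume (Vset κ q) :=
              (measure_mono hsub).trans (measure_union_le _ _)
          _ = volume (Vset κ q) := by rw [h0, zero_add]
          _ ≤ ENNReal.ofReal κ := hVle
      have hle : ENNReal.ofReal (b - a - 4 * I) ≤ ENNReal.ofReal κ := part1.trans this
      rw [ENNReal.ofReal_le_ofReal_iff hκ.le] at hle
      linarith
    · exact h0
  refine ⟨part1, part2, part3, ?_⟩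
  -- total variation
  have hSinf : (Kset κ q ∩ B).Infinite := by
    by_contra hfin
    rw [Set.not_infinite] at hfin
    rw [hfin.countable.measure_zero volume] at part3
    exact lt_irrefl _ part3
  apply evar_top_of_osc hSinf
  · rintro x ⟨hxK, -, hx1, hx2⟩
    have : alphaFun κ q x = 1 := if_pos hxK
    rw [this, one_mul]
    nlinarith
  · rintro x y ⟨hxK, -⟩ ⟨hyK, -⟩ hxy
    obtain ⟨r, hr1, hr2⟩ := exists_rat_btwn hxy
    refine ⟨(r:ℝ), hr1.le, hr2.le, ?_⟩
    have hrV : (r:ℝ) ∈ Vset κ q := by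
      have : (r:ℝ) ∈ Set.range q := by
        rw [hq_range]; exact ⟨r, rfl⟩
      obtain ⟨i, hi⟩ := this
      rw [← hi]
      refine mem_iUnion.2 ⟨i, ?_⟩
      constructor
      · have : 0 < κ * (2:ℝ)^(-(i:ℤ) - 2) := by positivity
        linarith
      · have : 0 < κ * (2:ℝ)^(-(i:ℤ) - 2) := by positivity
        linarith
    have : alphaFun κ q (r:ℝ) = 0 := if_neg (fun h => h hrV)
    rw [this, zero_mul, zero_mul]
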